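/- The group SL_m(ℍ) of invertible quaternionic m×m matrices of (Dieudonné) determinant 1, viewed as a subgroup of SL_{2m}(ℂ) via the standard identification ℍ^m ≅ ℂ^{2m}, acts transitively on the complex projective space ℙ^{2m−1}(ℂ). -/

import Mathlib

/-- The quaternionic structure map on `ℂ^{2m} ≅ ℍ^m` (right multiplication by `j`),
with `ℂ^{2m}` realized as `Fin m → ℂ × ℂ`. -/
def quatJ {m : ℕ} (z : Fin m → ℂ × ℂ) : Fin m → ℂ × ℂ :=
  fun k => (-(starRingEnd ℂ) (z k).2, (starRingEnd ℂ) (z k).1)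

namespace SLQ

open Complex Matrix Finset

noncomputable section

/-- Quaternion multiplication on `ℂ × ℂ` (`(a,b)` stands for `a + b j`). -/
def hmul (p r : ℂ × ℂ) : ℂ × ℂ :=
  (p.1 * r.1 - p.2 * (starRingEnd ℂ) r.2, p.1 * r.2 + p.2 * (starRingEnd ℂ) r.1)

@[simp] lemma hmul_zero_left (r : ℂ × ℂ) : hmul 0 r = 0 := by
  simp [hmul]

@[simp] lemma hmul_zero_right (p : ℂ × ℂ) : hmul p 0 = 0 := by
  simp [hmul]

@[simp] lemma hmul_one_left (r : ℂ × ℂ) : hmul ((1:ℂ), (0:ℂ)) r = r := by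
  simp [hmul]

@[simp] lemma hmul_one_right (p : ℂ × ℂ) : hmul p ((1:ℂ), (0:ℂ)) = p := by
  simp [hmul]

lemma hmul_add_left (p p' r : ℂ × ℂ) : hmul (p + p') r = hmul p r + hmul p' r := by
  simp only [hmul, Prod.mk_add_mk, Prod.fst_add, Prod.snd_add, Prod.mk.injEq]
  constructor <;> ring

lemma hmul_add_right (p r r' : ℂ × ℂ) : hmul p (r + r') = hmul p r + hmul p r' := by
  simp only [hmul, Prod.mk_add_mk, Prod.fst_add, Prod.snd_add, Prod.mk.injEq, map_add]
  constructor <;> ring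

lemma hmul_neg_right (p r : ℂ × ℂ) : hmul p (-r) = - hmul p r := by
  simp only [hmul, Prod.fst_neg, Prod.snd_neg, Prod.neg_mk, Prod.mk.injEq, map_neg]
  constructor <;> ring

lemma hmul_smul_left (c : ℂ) (p r : ℂ × ℂ) : hmul (c • p) r = c • hmul p r := by
  simp only [hmul, Prod.smul_fst, Prod.smul_snd, Prod.smul_mk, smul_eq_mul, Prod.mk.injEq]
  constructor <;> ring

/-- left multiplication by `j`, as a plain function; this is `quatJ` componentwise. -/
def jmul (p : ℂ × ℂ) : ℂ × ℂ := (-(starRingEnd ℂ) p.2, (starRingEnd ℂ) p.1)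

lemma hmul_jmul (p r : ℂ × ℂ) : hmul (jmul p) r = jmul (hmul p r) := by
  simp only [hmul, jmul, map_add, _root_.map_mul, map_sub, map_neg, Complex.conj_conj,
    Prod.mk.injEq]
  constructor <;> ring

variable {m : ℕ}

/-- The linear map attached to a quaternionic matrix `Q` (right action on row vectors). -/
def FQ (Q : Fin m → Fin m → ℂ × ℂ) : (Fin m → ℂ × ℂ) →ₗ[ℂ] (Fin m → ℂ × ℂ) where
  toFun v := fun j => ∑ l, hmul (v l) (Q j l)
  map_add' v w := by
    funext j
    simp only [Pi.add_apply, ← Finset.sum_add_distrib, hmul_add_left]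
  map_smul' c v := by
    funext j
    simp only [Pi.smul_apply, RingHom.id_apply, Finset.smul_sum, hmul_smul_left]

lemma FQ_apply (Q : Fin m → Fin m → ℂ × ℂ) (v : Fin m → ℂ × ℂ) (j : Fin m) :
    FQ Q v j = ∑ l, hmul (v l) (Q j l) := rfl

/-- `FQ` commutes with the quaternionic structure. -/
lemma FQ_quatJ (Q : Fin m → Fin m → ℂ × ℂ) (v : Fin m → ℂ × ℂ) :
    FQ Q (quatJ v) = quatJ (FQ Q v) := by
  funext j
  have h1 : quatJ (FQ Q v) j = jmul (∑ l, hmul (v l) (Q j l)) := rfl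
  have h2 : ∀ l, hmul (quatJ v l) (Q j l) = jmul (hmul (v l) (Q j l)) := fun l =>
    hmul_jmul (v l) (Q j l)
  rw [FQ_apply, h1]
  rw [Finset.sum_congr rfl fun l _ => h2 l]
  -- jmul of a sum
  induction (Finset.univ : Finset (Fin m)) using Finset.induction with
  | empty => simp [jmul]; rfl
  | insert a s h ih =>
      rw [Finset.sum_insert h, Finset.sum_insert h, ih]
      simp only [jmul, Prod.fst_add, Prod.snd_add, map_add, Prod.mk_add_mk, Prod.mk.injEq]
      exact ⟨by ring, trivial⟩

/-- Coordinates: `Fin m → ℂ × ℂ ≃ (Fin m × Fin 2 → ℂ)`. -/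
def E : (Fin m → ℂ × ℂ) ≃ₗ[ℂ] (Fin m × Fin 2 → ℂ) where
  toFun v := fun p => ![(v p.1).1, (v p.1).2] p.2
  invFun w := fun k => (w (k, 0), w (k, 1))
  map_add' v w := by
    funext ⟨k, t⟩
    fin_cases t <;> simp
  map_smul' c v := by
    funext ⟨k, t⟩
    fin_cases t <;> simp
  left_inv v := by funext k; simp
  right_inv w := by
    funext ⟨k, t⟩
    fin_cases t <;> simp

/-- The standard basis of `Fin m → ℂ × ℂ` indexed by `Fin m × Fin 2`. -/
def bV (m : ℕ) : Module.Basis (Fin m × Fin 2) ℂ (Fin m → ℂ × ℂ) := Module.Basis.ofEquivFun E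

/-- The `2 × 2` complex block corresponding to right quaternion multiplication by `r`. -/
def Bq (r : ℂ × ℂ) : Matrix (Fin 2) (Fin 2) ℂ :=
  !![r.1, -(starRingEnd ℂ) r.2; r.2, (starRingEnd ℂ) r.1]

@[simp] lemma Bq_zero : Bq (0 : ℂ × ℂ) = 0 := by
  ext s t
  fin_cases s <;> fin_cases t <;> simp [Bq]

@[simp] lemma Bq_one : Bq ((1:ℂ), (0:ℂ)) = 1 := by
  ext s t
  fin_cases s <;> fin_cases t <;> simp [Bq, Matrix.one_apply]

/-- The complex `2m × 2m` matrix attached to a quaternionic matrix `Q`. -/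
def MQ (Q : Fin m → Fin m → ℂ × ℂ) : Matrix (Fin m × Fin 2) (Fin m × Fin 2) ℂ :=
  fun p p' => Bq (Q p.1 p'.1) p.2 p'.2

lemma E_symm_apply (w : Fin m × Fin 2 → ℂ) (k : Fin m) :
    E.symm w k = (w (k, 0), w (k, 1)) := rfl

lemma toMatrix_FQ (Q : Fin m → Fin m → ℂ × ℂ) :
    LinearMap.toMatrix (bV m) (bV m) (FQ Q) = MQ Q := by
  ext ⟨j, s⟩ ⟨l, t⟩
  rw [LinearMap.toMatrix_apply]
  have hb : (bV m) (l, t) = fun k => ((if k = l ∧ (0:Fin 2) = t then (1:ℂ) else 0),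
      (if k = l ∧ (1:Fin 2) = t then (1:ℂ) else 0)) := by
    rw [bV, Module.Basis.coe_ofEquivFun]
    funext k
    simp [E_symm_apply, Pi.single_apply, Prod.ext_iff]
  rw [hb]
  have hsum : FQ Q (fun k => ((if k = l ∧ (0:Fin 2) = t then (1:ℂ) else 0),
      (if k = l ∧ (1:Fin 2) = t then (1:ℂ) else 0))) j
      = hmul ((if (0:Fin 2) = t then (1:ℂ) else 0), (if (1:Fin 2) = t then (1:ℂ) else 0))
        (Q j l) := by
    rw [FQ_apply, Finset.sum_eq_single l]
    · simp
    · intro l' _ hl'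
      have : ((if l' = l ∧ (0:Fin 2) = t then (1:ℂ) else 0),
          (if l' = l ∧ (1:Fin 2) = t then (1:ℂ) else 0)) = (0 : ℂ × ℂ) := by
        simp [hl']
      rw [this, hmul_zero_left]
    · simp
  rw [bV, Module.Basis.ofEquivFun_repr_apply]
  have hE : ∀ v : Fin m → ℂ × ℂ, E v (j, s) = ![(v j).1, (v j).2] s := fun v => rfl
  rw [hE, hsum]
  fin_cases s <;> fin_cases t <;>
    simp [hmul, MQ, Bq] <;> ring

lemma det_FQ (Q : Fin m → Fin m → ℂ × ℂ) :
    LinearMap.det (FQ Q) = (MQ Q).det := by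
  rw [← LinearMap.det_toMatrix (bV m), toMatrix_FQ]

/-- Determinant of a block-diagonal quaternionic matrix. -/
lemma det_MQ_diag (Q : Fin m → Fin m → ℂ × ℂ) (h : ∀ j l, j ≠ l → Q j l = 0) :
    (MQ Q).det = ∏ j, ((Q j j).1 * (starRingEnd ℂ) (Q j j).1
      + (Q j j).2 * (starRingEnd ℂ) (Q j j).2) := by
  have hM : MQ Q = Matrix.reindex (Equiv.prodComm (Fin 2) (Fin m))
      (Equiv.prodComm (Fin 2) (Fin m)) (Matrix.blockDiagonal fun j => Bq (Q j j)) := by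
    ext ⟨j, s⟩ ⟨l, t⟩
    simp only [MQ, Matrix.reindex_apply, Matrix.submatrix_apply, Equiv.prodComm_symm,
      Equiv.prodComm_apply, Prod.swap_prod_mk, Matrix.blockDiagonal_apply]
    by_cases hjl : j = l
    · subst hjl; simp
    · rw [h j l hjl, if_neg hjl, Bq_zero]
      rfl
  rw [hM, Matrix.det_reindex_self, Matrix.det_blockDiagonal]
  refine Finset.prod_congr rfl fun j _ => ?_
  rw [Bq, Matrix.det_fin_two_of]
  ring

lemma lt_lex {p p' : Fin m × Fin 2} (h : (finProdFinEquiv p : Fin (m * 2)) < finProdFinEquiv p') :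
    p.1 < p'.1 ∨ (p.1 = p'.1 ∧ (p.2 : ℕ) < (p'.2 : ℕ)) := by
  rcases p with ⟨a, s⟩
  rcases p' with ⟨c, t⟩
  have h1 : (s : ℕ) + 2 * (a : ℕ) < (t : ℕ) + 2 * (c : ℕ) := h
  have hs : (s : ℕ) < 2 := s.2
  have ht : (t : ℕ) < 2 := t.2
  have : (a : ℕ) < (c : ℕ) ∨ ((a : ℕ) = (c : ℕ) ∧ (s : ℕ) < (t : ℕ)) := by omega
  rcases this with h' | ⟨h1', h2'⟩
  · exact Or.inl h'
  · exact Or.inr ⟨Fin.ext h1', h2'⟩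

lemma Bq_diag_one (r : ℂ × ℂ) (hr : r = ((1:ℂ), (0:ℂ))) (s : Fin 2) : Bq r s s = 1 := by
  subst hr; rw [Bq_one]; simp

/-- Determinant of a "lower-triangular" quaternionic matrix with `1`s on the diagonal. -/
lemma det_MQ_lower (Q : Fin m → Fin m → ℂ × ℂ) (hd : ∀ j, Q j j = ((1:ℂ), (0:ℂ)))
    (hl : ∀ j l, j < l → Q j l = 0) : (MQ Q).det = 1 := by
  rw [← Matrix.det_reindex_self finProdFinEquiv (MQ Q)]
  rw [Matrix.det_of_lowerTriangular]
  · rw [← Equiv.prod_comp finProdFinEquiv]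
    have : ∀ p : Fin m × Fin 2, (Matrix.reindex finProdFinEquiv finProdFinEquiv (MQ Q))
        (finProdFinEquiv p) (finProdFinEquiv p) = 1 := by
      intro ⟨a, s⟩
      simp only [Matrix.reindex_apply, Matrix.submatrix_apply, Equiv.symm_apply_apply]
      exact Bq_diag_one _ (hd a) s
    rw [Finset.prod_congr rfl fun p _ => this p, Finset.prod_const_one]
  · intro i j hij
    simp only [OrderDual.toDual_lt_toDual] at hij
    obtain ⟨p, rfl⟩ := finProdFinEquiv.surjective i
    obtain ⟨p', rfl⟩ := finProdFinEquiv.surjective j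
    simp only [Matrix.reindex_apply, Matrix.submatrix_apply, Equiv.symm_apply_apply]
    rcases lt_lex hij with h' | ⟨h1', h2'⟩
    · show Bq (Q p.1 p'.1) p.2 p'.2 = 0
      rw [hl _ _ h', Bq_zero]; rfl
    · show Bq (Q p.1 p'.1) p.2 p'.2 = 0
      rw [h1', hd]
      have hs : (p.2 : ℕ) = 0 := by omega
      have ht : (p'.2 : ℕ) = 1 := by omega
      have : p.2 = 0 := Fin.ext hs
      have h2 : p'.2 = 1 := Fin.ext ht
      rw [this, h2, Bq_one]
      simp [Matrix.one_apply]

/-- Determinant of an "upper-triangular" quaternionic matrix with `1`s on the diagonal. -/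
lemma det_MQ_upper (Q : Fin m → Fin m → ℂ × ℂ) (hd : ∀ j, Q j j = ((1:ℂ), (0:ℂ)))
    (hu : ∀ j l, l < j → Q j l = 0) : (MQ Q).det = 1 := by
  rw [← Matrix.det_reindex_self finProdFinEquiv (MQ Q)]
  rw [Matrix.det_of_upperTriangular]
  · rw [← Equiv.prod_comp finProdFinEquiv]
    have : ∀ p : Fin m × Fin 2, (Matrix.reindex finProdFinEquiv finProdFinEquiv (MQ Q))
        (finProdFinEquiv p) (finProdFinEquiv p) = 1 := by
      intro ⟨a, s⟩
      simp only [Matrix.reindex_apply, Matrix.submatrix_apply, Equiv.symm_apply_apply]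
      exact Bq_diag_one _ (hd a) s
    rw [Finset.prod_congr rfl fun p _ => this p, Finset.prod_const_one]
  · intro i j hij
    simp only [id] at hij
    obtain ⟨p, rfl⟩ := finProdFinEquiv.surjective i
    obtain ⟨p', rfl⟩ := finProdFinEquiv.surjective j
    simp only [Matrix.reindex_apply, Matrix.submatrix_apply, Equiv.symm_apply_apply]
    rcases lt_lex hij with h' | ⟨h1', h2'⟩
    · show Bq (Q p.1 p'.1) p.2 p'.2 = 0
      rw [hu _ _ h', Bq_zero]; rfl
    · show Bq (Q p.1 p'.1) p.2 p'.2 = 0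
      rw [← h1', hd]
      have hs : (p'.2 : ℕ) = 0 := by omega
      have ht : (p.2 : ℕ) = 1 := by omega
      have h1 : p'.2 = 0 := Fin.ext hs
      have h2 : p.2 = 1 := Fin.ext ht
      rw [h1, h2, Bq_one]
      simp [Matrix.one_apply]

lemma FQ_add (Q₁ Q₂ : Fin m → Fin m → ℂ × ℂ) (v : Fin m → ℂ × ℂ) (j : Fin m) :
    FQ (fun j l => Q₁ j l + Q₂ j l) v j = FQ Q₁ v j + FQ Q₂ v j := by
  simp only [FQ_apply, hmul_add_right, Finset.sum_add_distrib]

lemma FQ_diag (d : Fin m → ℂ × ℂ) (v : Fin m → ℂ × ℂ) (j : Fin m) :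
    FQ (fun j l => if j = l then d j else 0) v j = hmul (v j) (d j) := by
  rw [FQ_apply, Finset.sum_eq_single j]
  · simp
  · intro l _ hl
    rw [if_neg fun h => hl h.symm, hmul_zero_right]
  · simp

lemma FQ_single (a b : Fin m) (c : ℂ × ℂ) (v : Fin m → ℂ × ℂ) (j : Fin m) :
    FQ (fun j l => if j = a ∧ l = b then c else 0) v j
      = if j = a then hmul (v b) c else 0 := by
  rw [FQ_apply]
  by_cases hj : j = a
  · rw [if_pos hj, Finset.sum_eq_single b]
    · simp [hj]
    · intro l _ hl
      rw [if_neg fun h => hl h.2, hmul_zero_right]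
    · simp
  · rw [if_neg hj]
    refine Finset.sum_eq_zero fun l _ => ?_
    rw [if_neg fun h => hj h.1, hmul_zero_right]

lemma FQ_col [NeZero m] (w : Fin m → ℂ × ℂ) (v : Fin m → ℂ × ℂ) (j : Fin m) :
    FQ (fun j l => if l = 0 then w j else 0) v j = hmul (v 0) (w j) := by
  rw [FQ_apply, Finset.sum_eq_single 0]
  · simp
  · intro l _ hl
    rw [if_neg hl, hmul_zero_right]
  · simp

/-- quaternionic norm (as a complex number). -/
def Nq (q : ℂ × ℂ) : ℂ := q.1 * (starRingEnd ℂ) q.1 + q.2 * (starRingEnd ℂ) q.2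

lemma Nq_eq (q : ℂ × ℂ) : Nq q = ((Complex.normSq q.1 + Complex.normSq q.2 : ℝ) : ℂ) := by
  rw [Nq, Complex.mul_conj, Complex.mul_conj]
  push_cast
  ring

lemma Nq_ne_zero (q : ℂ × ℂ) (hq : q ≠ 0) : Nq q ≠ 0 := by
  rw [Nq_eq]
  have h1 : q.1 ≠ 0 ∨ q.2 ≠ 0 := by
    by_contra h
    push_neg at h
    exact hq (Prod.ext h.1 h.2)
  have : 0 < Complex.normSq q.1 + Complex.normSq q.2 := by
    rcases h1 with h | h
    · have := Complex.normSq_pos.2 h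
      have := Complex.normSq_nonneg q.2
      linarith
    · have := Complex.normSq_pos.2 h
      have := Complex.normSq_nonneg q.1
      linarith
  exact_mod_cast this.ne'

/-- quaternionic inverse. -/
def qinv (q : ℂ × ℂ) : ℂ × ℂ := ((starRingEnd ℂ) q.1 / Nq q, -q.2 / Nq q)

lemma hmul_qinv (q r : ℂ × ℂ) (hq : q ≠ 0) : hmul q (hmul (qinv q) r) = r := by
  have hN := Nq_ne_zero q hq
  have hNc : (starRingEnd ℂ) (Nq q) = Nq q := by
    simp only [Nq, map_add, _root_.map_mul, Complex.conj_conj]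
    ring
  obtain ⟨a, b⟩ := q
  obtain ⟨c, d⟩ := r
  simp only [hmul, qinv, Prod.mk.injEq, map_add, _root_.map_mul, map_sub, map_neg, map_div₀,
    Complex.conj_conj, hNc] at *
  have hN' : a * (starRingEnd ℂ) a + b * (starRingEnd ℂ) b ≠ 0 := by simpa [Nq] using hN
  constructor <;> (field_simp [Nq, hN']; simp only [Nq]; ring)

/-- The base point `e₀`. -/
def e0 (m : ℕ) [NeZero m] : Fin m → ℂ × ℂ := fun k => if k = 0 then ((1:ℂ), (0:ℂ)) else 0

/-- Elementary shear: add (a quaternion multiple of) coordinate `K` to coordinate `0`. -/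
def QAdd [NeZero m] (K : Fin m) (c : ℂ × ℂ) : Fin m → Fin m → ℂ × ℂ :=
  fun j l => (if j = l then ((1:ℂ), (0:ℂ)) else 0) + (if j = 0 ∧ l = K then c else 0)

lemma FQ_QAdd [NeZero m] (K : Fin m) (c : ℂ × ℂ) (v : Fin m → ℂ × ℂ) (j : Fin m) :
    FQ (QAdd K c) v j = v j + if j = 0 then hmul (v K) c else 0 := by
  unfold QAdd
  rw [FQ_add, FQ_diag, FQ_single, hmul_one_right]

lemma quatJ_real_smul (t : ℝ) (w : Fin m → ℂ × ℂ) :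
    quatJ ((t:ℂ) • w) = (t:ℂ) • quatJ w := by
  funext k
  simp only [quatJ, Pi.smul_apply, Prod.smul_fst, Prod.smul_snd, smul_eq_mul, _root_.map_mul,
    Complex.conj_ofReal, Prod.smul_mk, Prod.mk.injEq]
  exact ⟨by ring, trivial⟩

lemma key [NeZero m] (z : Fin m → ℂ × ℂ) (hz : z ≠ 0) :
    ∃ f : (Fin m → ℂ × ℂ) →ₗ[ℂ] (Fin m → ℂ × ℂ),
      LinearMap.det f = 1 ∧ (∀ v, f (quatJ v) = quatJ (f v)) ∧
      ∃ c : ℂˣ, f (e0 m) = (c : ℂ) • z := by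
  obtain ⟨k, hk⟩ : ∃ k, z k ≠ 0 := by
    by_contra h
    push_neg at h
    exact hz (funext fun k => h k)
  set K : Fin m := if z 0 = 0 then k else 0 with hK
  have hzK : z K ≠ 0 := by
    by_cases h0 : z 0 = 0 <;> simp [hK, h0, hk]
  set cA : ℂ × ℂ := if K = 0 then 0 else ((1:ℂ), (0:ℂ)) with hcA
  have hcA0 : K = 0 → cA = 0 := fun h => by simp [hcA, h]
  set z' : Fin m → ℂ × ℂ := FQ (QAdd K cA) z with hz'def
  have hz'j : ∀ j, z' j = z j + if j = 0 then hmul (z K) cA else 0 := fun j => by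
    rw [hz'def]; exact FQ_QAdd K cA z j
  have hq : z' 0 ≠ 0 := by
    rw [hz'j 0, if_pos rfl]
    by_cases h0 : K = 0
    · rw [hcA0 h0, hmul_zero_right, add_zero, ← h0]
      exact hzK
    · have hz0 : z 0 = 0 := by
        by_contra h0'
        exact h0 (by simp [hK, h0'])
      have hc1 : cA = ((1:ℂ), (0:ℂ)) := by simp [hcA, h0]
      rw [hz0, hc1, hmul_one_right, zero_add]
      exact hzK
  set q : ℂ × ℂ := z' 0 with hqdef
  set y : Fin m → ℂ × ℂ := fun j => if j = 0 then 0 else hmul (qinv q) (z' j) with hy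
  set QU : Fin m → Fin m → ℂ × ℂ :=
    fun j l => (if j = l then ((1:ℂ), (0:ℂ)) else 0) + (if l = 0 then y j else 0) with hQU
  set QD : Fin m → Fin m → ℂ × ℂ :=
    fun j l => if j = l then (if j = 0 then q else ((1:ℂ), (0:ℂ))) else 0 with hQD
  set f1 := (FQ (QAdd K (-cA))).comp ((FQ QU).comp (FQ QD)) with hf1
  -- the action of `f1` on `e0`
  have hstep1 : FQ QD (e0 m) = fun j => if j = 0 then q else 0 := by
    funext j
    rw [hQD, FQ_diag]
    by_cases hj : j = 0 <;> simp [e0, hj]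
  have hstep2 : FQ QU (fun j => if j = 0 then q else 0) = z' := by
    funext j
    rw [hQU, FQ_add, FQ_diag, FQ_col, hmul_one_right, if_pos rfl]
    by_cases hj : j = 0
    · simp [hj, hy, ← hqdef]
    · rw [if_neg hj, zero_add, hy]
      simp only [if_neg hj]
      exact hmul_qinv q (z' j) hq
  have hstep3 : FQ (QAdd K (-cA)) z' = z := by
    funext j
    rw [FQ_QAdd]
    by_cases hj : j = 0
    · rw [if_pos hj, hz'j j, if_pos hj]
      by_cases h0 : K = 0
      · simp [hcA0 h0]
      · have hzK' : z' K = z K := by rw [hz'j K, if_neg h0, add_zero]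
        rw [hzK', hmul_neg_right, add_neg_cancel_right]
    · rw [if_neg hj, add_zero, hz'j j, if_neg hj, add_zero]
  have hact : f1 (e0 m) = z := by
    rw [hf1]
    simp only [LinearMap.comp_apply]
    rw [hstep1, hstep2, hstep3]
  -- determinants
  have hdetD : LinearMap.det (FQ QD) = Nq q := by
    rw [det_FQ]
    rw [det_MQ_diag QD fun j l hjl => by simp [hQD, hjl]]
    rw [Finset.prod_eq_single (0 : Fin m)]
    · simp [hQD, Nq]
    · intro b _ hb
      simp [hQD, hb]
    · simp
  have hdetU : LinearMap.det (FQ QU) = 1 := by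
    rw [det_FQ]
    refine det_MQ_lower QU (fun j => ?_) (fun j l hjl => ?_)
    · by_cases hj : j = 0 <;> simp [hQU, hy, hj]
    · have h1 : j ≠ l := ne_of_lt hjl
      have h2 : l ≠ 0 := by
        rintro rfl
        rw [Fin.lt_def, Fin.val_zero] at hjl
        exact absurd hjl (Nat.not_lt_zero _)
      simp [hQU, h1, h2]
  have hdetA : ∀ c : ℂ × ℂ, (K = 0 → c = 0) →
      LinearMap.det (FQ (QAdd K c)) = 1 := by
    intro c hc
    rw [det_FQ]
    refine det_MQ_upper (QAdd K c) (fun j => ?_) (fun j l hlj => ?_)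
    · by_cases hj : j = 0
      · by_cases h0 : K = 0
        · simp [QAdd, hj, h0, hc h0]
        · have hK0' : ¬ (0 : Fin m) = K := fun h => h0 h.symm
          simp [QAdd, hj, hK0']
      · simp [QAdd, hj]
    · have h1 : j ≠ l := (ne_of_lt hlj).symm
      have h2 : j ≠ 0 := by
        rintro rfl
        rw [Fin.lt_def, Fin.val_zero] at hlj
        exact absurd hlj (Nat.not_lt_zero _)
      simp [QAdd, h1, h2]
  have hdet1 : LinearMap.det f1 = Nq q := by
    rw [hf1, LinearMap.det_comp, LinearMap.det_comp,
      hdetA (-cA) (fun h => by rw [hcA0 h, neg_zero]), hdetU, hdetD, one_mul, one_mul]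
  -- J-commutation of `f1`
  have hJ1 : ∀ v, f1 (quatJ v) = quatJ (f1 v) := by
    intro v
    rw [hf1]
    simp only [LinearMap.comp_apply, FQ_quatJ]
  -- rescale
  set Nr : ℝ := Complex.normSq q.1 + Complex.normSq q.2 with hNrdef
  have hNq : Nq q = (Nr : ℂ) := Nq_eq q
  have hNr : 0 < Nr := by
    have hq1 : q.1 ≠ 0 ∨ q.2 ≠ 0 := by
      by_contra h
      push_neg at h
      exact hq (Prod.ext h.1 h.2)
    have h1 := Complex.normSq_nonneg q.1
    have h2 := Complex.normSq_nonneg q.2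
    rcases hq1 with h | h
    · have := Complex.normSq_pos.2 h
      rw [hNrdef]; linarith
    · have := Complex.normSq_pos.2 h
      rw [hNrdef]; linarith
  set t : ℝ := Nr ^ (-(1 / (2 * (m:ℝ)))) with htdef
  have ht : 0 < t := Real.rpow_pos_of_pos hNr _
  have hfr : Module.finrank ℂ (Fin m → ℂ × ℂ) = 2 * m := by
    rw [Module.finrank_pi_fintype]
    simp [Module.finrank_prod, Finset.sum_const, mul_comm]
  have htm : t ^ (2 * m) = Nr⁻¹ := by
    rw [htdef, ← Real.rpow_natCast (Nr ^ _) (2 * m), ← Real.rpow_mul hNr.le]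
    have hmne : (m : ℝ) ≠ 0 := Nat.cast_ne_zero.2 (NeZero.ne m)
    have harg : (-(1 / (2 * (m:ℝ)))) * ((2 * m : ℕ) : ℝ) = -1 := by
      push_cast
      field_simp
    rw [harg, Real.rpow_neg_one]
  refine ⟨(t : ℂ) • f1, ?_, ?_, ?_⟩
  · rw [LinearMap.det_smul, hdet1, hfr, hNq, ← Complex.ofReal_pow, htm,
      ← Complex.ofReal_mul, inv_mul_cancel₀ hNr.ne']
    simp
  · intro v
    simp only [LinearMap.smul_apply]
    rw [hJ1 v, ← quatJ_real_smul]
  · refine ⟨Units.mk0 (t:ℂ) (by exact_mod_cast ht.ne'), ?_⟩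
    rw [LinearMap.smul_apply, hact]
    rfl

end

end SLQ

theorem sl_quaternionic_transitive_on_projective_space (m : ℕ) (hm : 1 ≤ m) :
    ∀ z w : Fin m → ℂ × ℂ, z ≠ 0 → w ≠ 0 →
      ∃ f : (Fin m → ℂ × ℂ) →ₗ[ℂ] (Fin m → ℂ × ℂ),
        LinearMap.det f = 1 ∧ (∀ v, f (quatJ v) = quatJ (f v)) ∧
        ∃ c : ℂˣ, f z = (c : ℂ) • w := by
  haveI : NeZero m := ⟨by omega⟩
  intro z w hz hw
  obtain ⟨fz, hdz, hJz, cz, hcz⟩ := SLQ.key z hz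
  obtain ⟨fw, hdw, hJw, cw, hcw⟩ := SLQ.key w hw
  have hfz : LinearMap.det fz ≠ 0 := by rw [hdz]; exact one_ne_zero
  set ez := fz.equivOfDetNeZero hfz with hez
  have hezco : (ez : (Fin m → ℂ × ℂ) →ₗ[ℂ] (Fin m → ℂ × ℂ)) = fz :=
    LinearEquiv.coe_ofIsUnitDet _
  have hezap : ∀ x, ez x = fz x := fun x => by rw [← hezco]; rfl
  refine ⟨fw ∘ₗ (ez.symm : (Fin m → ℂ × ℂ) →ₗ[ℂ] (Fin m → ℂ × ℂ)), ?_, ?_, ?_⟩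
  · rw [LinearMap.det_comp, hdw, one_mul]
    have h2 : LinearMap.det ((ez.symm : (Fin m → ℂ × ℂ) →ₗ[ℂ] _) ∘ₗ
        (ez : (Fin m → ℂ × ℂ) →ₗ[ℂ] _)) = 1 := by
      have hid : ((ez.symm : (Fin m → ℂ × ℂ) →ₗ[ℂ] _) ∘ₗ
          (ez : (Fin m → ℂ × ℂ) →ₗ[ℂ] _)) = LinearMap.id := by
        apply LinearMap.ext
        intro x
        simp
      rw [hid, LinearMap.det_id]
    rw [LinearMap.det_comp, hezco, hdz, mul_one] at h2
    exact h2
  · intro v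
    have hsym : ∀ u, ez.symm (quatJ u) = quatJ (ez.symm u) := by
      intro u
      apply ez.injective
      have h1 : ez (quatJ (ez.symm u)) = quatJ (ez (ez.symm u)) := by
        rw [hezap, hezap, hJz]
      rw [h1, LinearEquiv.apply_symm_apply, LinearEquiv.apply_symm_apply]
    simp only [LinearMap.comp_apply, LinearEquiv.coe_coe]
    rw [hsym, hJw]
  · refine ⟨cw * cz⁻¹, ?_⟩
    have h0 : ez.symm z = ((cz⁻¹ : ℂˣ) : ℂ) • SLQ.e0 m := by
      have h1 : ez (((cz⁻¹ : ℂˣ) : ℂ) • SLQ.e0 m) = z := by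
        rw [map_smul, hezap, hcz, smul_smul]
        norm_cast
        rw [inv_mul_cancel, Units.val_one, one_smul]
      rw [← h1, LinearEquiv.symm_apply_apply]
    simp only [LinearMap.comp_apply, LinearEquiv.coe_coe]
    rw [h0, map_smul, hcw, smul_smul, Units.val_mul]
    ring_nf
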